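/- Let λ ⊢ n have Frobenius coordinates (a₁,...,a_m | b₁,...,b_m) with a₁ ≥ b₁, let k ≥ 2 be an integer, and set r = n − a₁ − 1/2. Then: (i) there exists an absolute constant c₀ > 0 such that if r ≤ c₀·n then ∑_{i=1}^m (a_i/n)^k + ∑_{i=1}^m (b_i/n)^k ≤ exp(−k·r/n + k·r²/n²); and (ii) for all r ≤ n, ∑_{i=1}^m (a_i/n)^k + ∑_{i=1}^m (b_i/n)^k ≤ exp(−k·r/(2n)). -/

import Mathlib

/-- The `i`-th part of a partition (0-indexed, parts in decreasing order, `0` beyond the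
number of parts). -/
def partNth (n : ℕ) (l : Nat.Partition n) (i : ℕ) : ℕ :=
  ((l.parts.sort (· ≤ ·)).reverse.getD i 0)

/-- Diagonal length `m` of the partition: the number of `i` (0-indexed) with `λ_{i+1} ≥ i+1`. -/
def diagLen (n : ℕ) (l : Nat.Partition n) : ℕ :=
  ((Finset.range n).filter (fun i => i < partNth n l i)).card

/-- Number of parts of the conjugate partition `λ'` at 0-indexed position `i`, i.e.
`λ'_{i+1} = #{j : λ_j ≥ i+1}`. -/
def conjNth (n : ℕ) (l : Nat.Partition n) (i : ℕ) : ℕ :=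
  ((Finset.range n).filter (fun j => i < partNth n l j)).card

/-- Frobenius coordinate `a_i = λ_i − i + 1/2` (1-indexed; here `i : ℕ` is 0-indexed). -/
noncomputable def fA (n : ℕ) (l : Nat.Partition n) (i : ℕ) : ℝ :=
  (partNth n l i : ℝ) - i - 1/2

/-- Frobenius coordinate `b_i = λ′_i − i + 1/2` (1-indexed; here `i : ℕ` is 0-indexed). -/
noncomputable def fB (n : ℕ) (l : Nat.Partition n) (i : ℕ) : ℝ :=
  (conjNth n l i : ℝ) - i - 1/2

/-- The falling factorial `x^{k↓} = x(x−1)⋯(x−k+1)`. -/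
noncomputable def fall (x : ℝ) (k : ℕ) : ℝ := ∏ i ∈ Finset.range k, (x - i)


section aux
variable {n : ℕ} (l : Nat.Partition n)

lemma partsList_sum : ((l.parts.sort (· ≤ ·)).reverse).sum = n := by
  rw [List.sum_reverse]
  have := Multiset.sort_eq l.parts (· ≤ ·)
  have h2 : ((Multiset.sort l.parts (· ≤ ·) : List ℕ) : Multiset ℕ).sum = l.parts.sum := by
    rw [this]
  rw [Multiset.sum_coe] at h2
  rw [h2, l.parts_sum]

lemma partsList_len : ((l.parts.sort (· ≤ ·)).reverse).length ≤ n := by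
  rw [List.length_reverse, Multiset.length_sort]
  have h1 : l.parts.card • 1 ≤ l.parts.sum :=
    Multiset.card_nsmul_le_sum (fun x hx => l.parts_pos hx)
  simpa [l.parts_sum] using h1

lemma partsList_sorted : ((l.parts.sort (· ≤ ·)).reverse).Pairwise (· ≥ ·) := by
  rw [List.pairwise_reverse]
  exact Multiset.pairwise_sort l.parts (· ≤ ·)

lemma partNth_anti {i j : ℕ} (h : i ≤ j) : partNth n l j ≤ partNth n l i := by
  unfold partNth
  set L := ((l.parts.sort (· ≤ ·)).reverse) with hL
  by_cases hj : j < L.length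
  · have hi : i < L.length := lt_of_le_of_lt h hj
    rw [List.getD_eq_getElem L 0 hj, List.getD_eq_getElem L 0 hi]
    rcases eq_or_lt_of_le h with rfl | hlt
    · exact le_refl _
    · exact List.pairwise_iff_getElem.1 (partsList_sorted l) i j hi hj hlt
  · rw [List.getD_eq_default L 0 (not_lt.1 hj)]
    exact Nat.zero_le _

lemma partNth_le {i : ℕ} : partNth n l i ≤ n := by
  unfold partNth
  set L := ((l.parts.sort (· ≤ ·)).reverse) with hL
  by_cases hi : i < L.length
  · rw [List.getD_eq_getElem L 0 hi]
    have : L[i] ∈ L := List.getElem_mem _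
    calc L[i] ≤ L.sum := List.single_le_sum (fun x _ => Nat.zero_le x) _ this
      _ = n := partsList_sum l
  · rw [List.getD_eq_default L 0 (not_lt.1 hi)]; exact Nat.zero_le _

lemma sum_getD_eq (L : List ℕ) : ∀ m, L.length ≤ m → ∑ i ∈ Finset.range m, L.getD i 0 = L.sum := by
  induction L with
  | nil => intro m _; simp
  | cons a L ih =>
    intro m hm
    cases m with
    | zero => simp at hm
    | succ m =>
      rw [Finset.sum_range_succ']
      simp only [List.getD_cons_succ, List.getD_cons_zero]
      rw [ih m (by simpa using hm), List.sum_cons, add_comm]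

lemma sum_partNth : ∑ j ∈ Finset.range n, partNth n l j = n := by
  unfold partNth
  rw [sum_getD_eq _ n (partsList_len l), partsList_sum l]

end aux
lemma dc_eq_range (s : Finset ℕ) (hs : ∀ i ∈ s, ∀ j, j ≤ i → j ∈ s) :
    s = Finset.range s.card := by
  rcases s.eq_empty_or_nonempty with h | h
  · simp [h]
  · have hset : s = Finset.range (s.max' h + 1) := by
      ext x
      simp only [Finset.mem_range, Nat.lt_succ_iff]
      exact ⟨fun hx => s.le_max' x hx, fun hx => hs _ (s.max'_mem h) x hx⟩
    rw [hset, Finset.card_range]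

section aux2
variable {n : ℕ} (l : Nat.Partition n)

lemma conj_filter_eq (i : ℕ) :
    (Finset.range n).filter (fun j => i < partNth n l j) = Finset.range (conjNth n l i) := by
  apply dc_eq_range
  intro a ha j hj
  simp only [Finset.mem_filter, Finset.mem_range] at ha ⊢
  exact ⟨lt_of_le_of_lt hj ha.1, lt_of_lt_of_le ha.2 (partNth_anti l hj)⟩

lemma lt_conjNth_iff {i j : ℕ} (hj : j < n) :
    j < conjNth n l i ↔ i < partNth n l j := by
  rw [← Finset.mem_range (n := conjNth n l i), ← conj_filter_eq]
  simp [Finset.mem_filter, hj]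

lemma conjNth_le (i : ℕ) : conjNth n l i ≤ n := by
  unfold conjNth
  exact le_trans (Finset.card_filter_le _ _) (by simp)

lemma conjNth_anti {i j : ℕ} (h : i ≤ j) : conjNth n l j ≤ conjNth n l i := by
  apply Finset.card_le_card
  intro a ha
  simp only [Finset.mem_filter, Finset.mem_range] at ha ⊢
  exact ⟨ha.1, lt_of_le_of_lt h ha.2⟩

lemma diag_filter_eq :
    (Finset.range n).filter (fun i => i < partNth n l i) = Finset.range (diagLen n l) := by
  apply dc_eq_range
  intro a ha j hj
  simp only [Finset.mem_filter, Finset.mem_range] at ha ⊢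
  refine ⟨lt_of_le_of_lt hj ha.1, ?_⟩
  calc j ≤ a := hj
    _ < partNth n l a := ha.2
    _ ≤ partNth n l j := partNth_anti l hj

lemma lt_diagLen {i : ℕ} (h : i < diagLen n l) : i < n ∧ i < partNth n l i := by
  have : i ∈ (Finset.range n).filter (fun i => i < partNth n l i) := by
    rw [diag_filter_eq]; exact Finset.mem_range.2 h
  simpa [Finset.mem_filter] using this

lemma lt_conjNth_of_diag {i : ℕ} (h : i < diagLen n l) : i < conjNth n l i :=
  (lt_conjNth_iff l (lt_diagLen l h).1).2 (lt_diagLen l h).2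

lemma diagLen_pos (hn : 0 < n) : 0 < diagLen n l := by
  have hp : 0 < partNth n l 0 := by
    by_contra h
    push_neg at h
    have hall : ∀ j ∈ Finset.range n, partNth n l j = 0 := fun j hj =>
      Nat.le_zero.1 (le_trans (partNth_anti l (Nat.zero_le j)) h)
    have := sum_partNth l
    rw [Finset.sum_eq_zero hall] at this
    omega
  have : 0 ∈ (Finset.range n).filter (fun i => i < partNth n l i) := by
    simp [hn, hp]
  rw [diag_filter_eq] at this
  simpa using this

end aux2
section frob
variable {n : ℕ} (l : Nat.Partition n)

/-- Hook at diagonal cell `i`. -/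
def hook (i : ℕ) : Finset (ℕ × ℕ) :=
  ({i} ×ˢ Finset.Ico i (partNth n l i)) ∪ (Finset.Ico (i+1) (conjNth n l i) ×ˢ {i})

/-- Young diagram. -/
def ydiag : Finset (ℕ × ℕ) :=
  (Finset.range n).biUnion (fun j => {j} ×ˢ Finset.range (partNth n l j))

lemma ydiag_card : (ydiag l).card = n := by
  unfold ydiag
  rw [Finset.card_biUnion]
  · simp only [Finset.card_product, Finset.card_singleton, Finset.card_range, one_mul]
    exact sum_partNth l
  · intro x _ y _ hxy
    simp only [Finset.disjoint_left, Finset.mem_product, Finset.mem_singleton]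
    rintro ⟨a, b⟩ ⟨h1, _⟩ ⟨h2, _⟩
    exact hxy (h1 ▸ h2 ▸ rfl)

lemma mem_ydiag {p : ℕ × ℕ} : p ∈ ydiag l ↔ p.1 < n ∧ p.2 < partNth n l p.1 := by
  unfold ydiag
  simp only [Finset.mem_biUnion, Finset.mem_range, Finset.mem_product, Finset.mem_singleton]
  constructor
  · rintro ⟨j, hj, h1, h2⟩; exact ⟨h1 ▸ hj, h1 ▸ h2⟩
  · rintro ⟨h1, h2⟩; exact ⟨p.1, h1, rfl, h2⟩

lemma hook_card {i : ℕ} (hi : i < diagLen n l) :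
    (hook l i).card = (partNth n l i - i) + (conjNth n l i - (i+1)) := by
  unfold hook
  rw [Finset.card_union_of_disjoint, Finset.card_product, Finset.card_product]
  · simp [Nat.card_Ico]
  · simp only [Finset.disjoint_left, Finset.mem_product, Finset.mem_singleton, Finset.mem_Ico]
    rintro ⟨a, b⟩ ⟨h1, _⟩ ⟨⟨h2, _⟩, _⟩
    omega

lemma hook_subset {i : ℕ} (hi : i < diagLen n l) : hook l i ⊆ ydiag l := by
  unfold hook
  intro p hp
  rw [mem_ydiag]
  simp only [Finset.mem_union, Finset.mem_product, Finset.mem_singleton, Finset.mem_Ico] at hp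
  obtain ⟨hin, hip⟩ := lt_diagLen l hi
  rcases hp with ⟨h1, h2, h3⟩ | ⟨⟨h2, h3⟩, h1⟩
  · exact ⟨h1 ▸ hin, h1 ▸ h3⟩
  · have hpn : p.1 < n := lt_of_lt_of_le h3 (conjNth_le l i)
    exact ⟨hpn, h1 ▸ ((lt_conjNth_iff l hpn).1 h3)⟩

lemma hook_disjoint {i j : ℕ} (hij : i ≠ j) : Disjoint (hook l i) (hook l j) := by
  unfold hook
  simp only [Finset.disjoint_left, Finset.mem_union, Finset.mem_product, Finset.mem_singleton,
    Finset.mem_Ico]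
  rintro ⟨a, b⟩ (⟨h1, h2, h3⟩ | ⟨⟨h2, h3⟩, h1⟩) (⟨g1, g2, g3⟩ | ⟨⟨g2, g3⟩, g1⟩) <;> omega

lemma frobenius_sum_le :
    ∑ i ∈ Finset.range (diagLen n l),
      ((partNth n l i - i) + (conjNth n l i - (i+1))) ≤ n := by
  have hcard : ((Finset.range (diagLen n l)).biUnion (hook l)).card =
      ∑ i ∈ Finset.range (diagLen n l), (hook l i).card := by
    apply Finset.card_biUnion
    intro x _ y _ hxy
    exact hook_disjoint l hxy
  have hsub : (Finset.range (diagLen n l)).biUnion (hook l) ⊆ ydiag l := by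
    intro p hp
    rw [Finset.mem_biUnion] at hp
    obtain ⟨i, hi, hpi⟩ := hp
    exact hook_subset l (Finset.mem_range.1 hi) hpi
  calc ∑ i ∈ Finset.range (diagLen n l), ((partNth n l i - i) + (conjNth n l i - (i+1)))
      = ∑ i ∈ Finset.range (diagLen n l), (hook l i).card :=
        Finset.sum_congr rfl (fun i hi => (hook_card l (Finset.mem_range.1 hi)).symm)
    _ = ((Finset.range (diagLen n l)).biUnion (hook l)).card := hcard.symm
    _ ≤ (ydiag l).card := Finset.card_le_card hsub
    _ = n := ydiag_card l

end frob
section realside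
variable {n : ℕ} (l : Nat.Partition n)

lemma fA_ge {i : ℕ} (hi : i < diagLen n l) : 1/2 ≤ fA n l i := by
  have h := (lt_diagLen l hi).2
  unfold fA
  have : (i : ℝ) + 1 ≤ (partNth n l i : ℝ) := by exact_mod_cast h
  linarith

lemma fB_ge {i : ℕ} (hi : i < diagLen n l) : 1/2 ≤ fB n l i := by
  have h := lt_conjNth_of_diag l hi
  unfold fB
  have : (i : ℝ) + 1 ≤ (conjNth n l i : ℝ) := by exact_mod_cast h
  linarith

lemma fA_le_zero (i : ℕ) : fA n l i ≤ fA n l 0 := by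
  unfold fA
  have h : (partNth n l i : ℝ) ≤ (partNth n l 0 : ℝ) := by
    exact_mod_cast partNth_anti l (Nat.zero_le i)
  have : (0:ℝ) ≤ i := Nat.cast_nonneg i
  push_cast
  linarith

lemma fB_le_zero (i : ℕ) : fB n l i ≤ fB n l 0 := by
  unfold fB
  have h : (conjNth n l i : ℝ) ≤ (conjNth n l 0 : ℝ) := by
    exact_mod_cast conjNth_anti l (Nat.zero_le i)
  have : (0:ℝ) ≤ i := Nat.cast_nonneg i
  push_cast
  linarith

lemma fA_zero_le : fA n l 0 ≤ (n : ℝ) - 1/2 := by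
  unfold fA
  have h : (partNth n l 0 : ℝ) ≤ (n : ℝ) := by exact_mod_cast partNth_le l
  push_cast
  linarith

lemma sum_fAB_le : ∑ i ∈ Finset.range (diagLen n l), (fA n l i + fB n l i) ≤ (n : ℝ) := by
  have key : ∀ i ∈ Finset.range (diagLen n l),
      fA n l i + fB n l i =
        (((partNth n l i - i) + (conjNth n l i - (i+1)) : ℕ) : ℝ) := by
    intro i hi
    have hi' := Finset.mem_range.1 hi
    have h1 : i + 1 ≤ partNth n l i := (lt_diagLen l hi').2
    have h2 : i + 1 ≤ conjNth n l i := lt_conjNth_of_diag l hi'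
    unfold fA fB
    push_cast [Nat.cast_sub (by omega : i ≤ partNth n l i), Nat.cast_sub h2]
    ring
  rw [Finset.sum_congr rfl key, ← Nat.cast_sum]
  exact_mod_cast frobenius_sum_le l

/-- `p₀ + c₀ ≤ n + 1` : first row plus first column of the diagram fit in `n+1`. -/
lemma part_add_conj_le (hn : 0 < n) : partNth n l 0 + conjNth n l 0 ≤ n + 1 := by
  obtain ⟨c, hc⟩ : ∃ c, conjNth n l 0 = c := ⟨_, rfl⟩
  rw [hc]
  rcases Nat.eq_zero_or_pos c with h0 | h0
  · have := partNth_le l (i := 0); omega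
  have hcn : c ≤ n := hc ▸ conjNth_le l 0
  have hsub : Finset.range c ⊆ Finset.range n := Finset.range_subset_range.2 hcn
  have h1 : ∑ j ∈ Finset.range c, partNth n l j ≤ n :=
    le_trans (Finset.sum_le_sum_of_subset hsub) (le_of_eq (sum_partNth l))
  obtain ⟨c', rfl⟩ : ∃ c', c = c' + 1 := ⟨c - 1, by omega⟩
  rw [Finset.sum_range_succ'] at h1
  have h2 : ∀ j ∈ Finset.range c', 1 ≤ partNth n l (j + 1) := by
    intro j hj
    have hj' := Finset.mem_range.1 hj
    have hjn : j + 1 < n := by omega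
    have := (lt_conjNth_iff l (i := 0) hjn).1 (by rw [hc]; omega)
    omega
  have h3 : (c' : ℕ) ≤ ∑ j ∈ Finset.range c', partNth n l (j+1) := by
    calc (c' : ℕ) = ∑ _j ∈ Finset.range c', 1 := by simp
      _ ≤ _ := Finset.sum_le_sum h2
  omega

lemma fB_zero_le (hn : 0 < n) : fB n l 0 ≤ (n : ℝ) - fA n l 0 := by
  have h := part_add_conj_le l hn
  unfold fA fB
  have : (partNth n l 0 : ℝ) + (conjNth n l 0 : ℝ) ≤ (n : ℝ) + 1 := by exact_mod_cast h
  push_cast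
  linarith

lemma part_add_part_le {i : ℕ} (h0 : 0 < i) (hin : i < n) :
    partNth n l 0 + partNth n l i ≤ n := by
  have hsub : ({0, i} : Finset ℕ) ⊆ Finset.range n := by
    intro x hx
    simp only [Finset.mem_insert, Finset.mem_singleton] at hx
    rcases hx with rfl | rfl <;> simp [Finset.mem_range] <;> omega
  have h1 : ∑ j ∈ ({0, i} : Finset ℕ), partNth n l j ≤ n :=
    le_trans (Finset.sum_le_sum_of_subset hsub) (le_of_eq (sum_partNth l))
  rwa [Finset.sum_pair (by omega)] at h1

lemma fA_rest_le {i : ℕ} (h0 : 0 < i) (hi : i < diagLen n l) :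
    fA n l i ≤ (n : ℝ) - fA n l 0 := by
  have hin := (lt_diagLen l hi).1
  have h := part_add_part_le l h0 hin
  unfold fA
  have : (partNth n l 0 : ℝ) + (partNth n l i : ℝ) ≤ (n : ℝ) := by exact_mod_cast h
  have hi' : (1:ℝ) ≤ i := by exact_mod_cast h0
  push_cast
  linarith

lemma sum_pow_le {s : Finset ℕ} {f : ℕ → ℝ} {c : ℝ} {k : ℕ} (hk : 1 ≤ k)
    (h0 : ∀ i ∈ s, 0 ≤ f i) (hc : ∀ i ∈ s, f i ≤ c) :
    ∑ i ∈ s, f i ^ k ≤ c ^ (k-1) * ∑ i ∈ s, f i := by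
  rw [Finset.mul_sum]
  apply Finset.sum_le_sum
  intro i hi
  have h1 : f i ^ k = f i ^ (k-1) * f i := by
    rw [← pow_succ]
    congr 1
    omega
  rw [h1]
  apply mul_le_mul_of_nonneg_right _ (h0 i hi)
  exact pow_le_pow_left₀ (h0 i hi) (hc i hi) _

end realside
lemma expBound1 {u ε : ℝ} {k : ℕ} (hk : 2 ≤ k) (hu0 : 0 ≤ u) (hu : u ≤ 1/8)
    (he0 : 0 < ε) (he : ε ≤ 1/2) :
    (1 - u - ε)^k + (u + ε)^k ≤ Real.exp (k * (-u + u^2)) := by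
  obtain ⟨j, rfl⟩ : ∃ j, k = j + 2 := ⟨k - 2, by omega⟩
  have hM0 : (0:ℝ) ≤ 1 - u + u^2 := by nlinarith
  have hα0 : (0:ℝ) ≤ 1 - u - ε := by linarith
  have hτ0 : (0:ℝ) ≤ u + ε := by linarith
  have hαM : 1 - u - ε ≤ 1 - u + u^2 := by nlinarith
  have hτM : u + ε ≤ 1 - u + u^2 := by nlinarith
  have hsq : (1-u-ε)^2 + (u+ε)^2 ≤ (1 - u + u^2)^2 := by nlinarith
  have b1 : (1-u-ε)^j ≤ (1 - u + u^2)^j := pow_le_pow_left₀ hα0 hαM j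
  have b2 : (u+ε)^j ≤ (1 - u + u^2)^j := pow_le_pow_left₀ hτ0 hτM j
  have h1 : (1-u-ε)^(j+2) + (u+ε)^(j+2) ≤ (1 - u + u^2)^(j+2) := by
    calc (1-u-ε)^(j+2) + (u+ε)^(j+2)
        = (1-u-ε)^2 * (1-u-ε)^j + (u+ε)^2 * (u+ε)^j := by ring
      _ ≤ (1-u-ε)^2 * (1 - u + u^2)^j + (u+ε)^2 * (1 - u + u^2)^j := by
          have := sq_nonneg (1-u-ε); have := sq_nonneg (u+ε)
          apply add_le_add
          · exact mul_le_mul_of_nonneg_left b1 (by positivity)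
          · exact mul_le_mul_of_nonneg_left b2 (by positivity)
      _ = ((1-u-ε)^2 + (u+ε)^2) * (1 - u + u^2)^j := by ring
      _ ≤ (1 - u + u^2)^2 * (1 - u + u^2)^j :=
          mul_le_mul_of_nonneg_right hsq (pow_nonneg hM0 j)
      _ = (1 - u + u^2)^(j+2) := by ring
  have h2 : 1 - u + u^2 ≤ Real.exp (-u + u^2) := by
    have := Real.add_one_le_exp (-u + u^2)
    linarith
  calc (1-u-ε)^(j+2) + (u+ε)^(j+2) ≤ (1 - u + u^2)^(j+2) := h1
    _ ≤ (Real.exp (-u + u^2))^(j+2) := pow_le_pow_left₀ hM0 h2 _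
    _ = Real.exp ((j+2 : ℕ) * (-u + u^2)) := (Real.exp_nat_mul _ _).symm

lemma expBound2 {u ε : ℝ} {k : ℕ} (hk : 2 ≤ k) (hu0 : 0 ≤ u) (he0 : 0 < ε)
    (hα0 : 0 ≤ 1 - u - ε) :
    (1 - u - ε)^(k-1) ≤ Real.exp (-((k:ℝ) * u) / 2) := by
  have h2 : 1 - u - ε ≤ Real.exp (-(u+ε)) := by
    have := Real.add_one_le_exp (-(u+ε)); linarith
  have h3 : (1-u-ε)^(k-1) ≤ (Real.exp (-(u+ε)))^(k-1) := pow_le_pow_left₀ hα0 h2 _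
  have h4 : (Real.exp (-(u+ε)))^(k-1) = Real.exp (((k-1:ℕ):ℝ) * (-(u+ε))) :=
    (Real.exp_nat_mul _ _).symm
  rw [h4] at h3
  apply le_trans h3
  apply Real.exp_le_exp.2
  have hkk : ((k-1:ℕ):ℝ) = (k:ℝ) - 1 := by
    have : (1:ℕ) ≤ k := by omega
    push_cast [Nat.cast_sub this]
    ring
  have hk2 : (2:ℝ) ≤ (k:ℝ) := by exact_mod_cast hk
  rw [hkk]
  nlinarith
theorem sum_frobenius_powers_bound :
    ∃ c₀ > (0 : ℝ), ∀ (n k : ℕ) (l : Nat.Partition n), 2 ≤ k →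
      fB n l 0 ≤ fA n l 0 →
      ((((n : ℝ) - fA n l 0 - 1/2) ≤ c₀ * n →
        (∑ i ∈ Finset.range (diagLen n l), (fA n l i / n) ^ k) +
          (∑ i ∈ Finset.range (diagLen n l), (fB n l i / n) ^ k) ≤
          Real.exp (-(k : ℝ) * ((n : ℝ) - fA n l 0 - 1/2) / n +
            (k : ℝ) * ((n : ℝ) - fA n l 0 - 1/2) ^ 2 / (n : ℝ) ^ 2)) ∧
      (((n : ℝ) - fA n l 0 - 1/2) ≤ n →
        (∑ i ∈ Finset.range (diagLen n l), (fA n l i / n) ^ k) +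
          (∑ i ∈ Finset.range (diagLen n l), (fB n l i / n) ^ k) ≤
          Real.exp (-(k : ℝ) * ((n : ℝ) - fA n l 0 - 1/2) / (2 * n)))) := by
  refine ⟨1/8, by norm_num, ?_⟩
  intro n k l hk hba
  by_cases hn : n = 0
  · subst hn
    have hd : diagLen 0 l = 0 := by simp [diagLen]
    rw [hd]
    simp only [Finset.range_zero, Finset.sum_empty, add_zero]
    exact ⟨fun _ => (Real.exp_pos _).le, fun _ => (Real.exp_pos _).le⟩
  have hn0 : 0 < n := Nat.pos_of_ne_zero hn
  have hnR : (0:ℝ) < n := by exact_mod_cast hn0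
  have hm0 : 0 < diagLen n l := diagLen_pos l hn0
  set m := diagLen n l with hmdef
  set A0 := fA n l 0 with hA0def
  set r := (n:ℝ) - A0 - 1/2 with hrdef
  set u := r / n with hudef
  set ε := 1 / (2*(n:ℝ)) with hεdef
  have hA0half : 1/2 ≤ A0 := fA_ge l hm0
  have hA0n : A0 ≤ (n:ℝ) - 1/2 := fA_zero_le l
  have hr0 : 0 ≤ r := by rw [hrdef]; linarith
  have hu0 : 0 ≤ u := div_nonneg hr0 hnR.le
  have hε0 : 0 < ε := by rw [hεdef]; positivity
  have hε2 : ε ≤ 1/2 := by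
    rw [hεdef, div_le_div_iff₀ (by linarith) (by norm_num)]
    have : (1:ℝ) ≤ n := by exact_mod_cast hn0
    linarith
  have hαeq : A0 / n = 1 - u - ε := by
    rw [hudef, hεdef, hrdef]
    field_simp
    ring
  have hτeq : ((n:ℝ) - A0)/n = u + ε := by
    rw [hudef, hεdef, hrdef]
    field_simp
    ring
  -- basic positivity of coordinates
  have hfA0 : ∀ i ∈ Finset.range m, 0 ≤ fA n l i / n :=
    fun i hi => div_nonneg (by linarith [fA_ge l (Finset.mem_range.1 hi)]) hnR.le
  have hfB0 : ∀ i ∈ Finset.range m, 0 ≤ fB n l i / n :=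
    fun i hi => div_nonneg (by linarith [fB_ge l (Finset.mem_range.1 hi)]) hnR.le
  -- Frobenius sum
  have hsum : (∑ i ∈ Finset.range m, fA n l i) + ∑ i ∈ Finset.range m, fB n l i ≤ (n:ℝ) := by
    have := sum_fAB_le l
    rwa [Finset.sum_add_distrib] at this
  have h0mem : (0:ℕ) ∈ Finset.range m := Finset.mem_range.2 hm0
  have hsplitA : A0 + ∑ i ∈ (Finset.range m).erase 0, fA n l i
      = ∑ i ∈ Finset.range m, fA n l i := by
    rw [hA0def]; exact Finset.add_sum_erase _ _ h0mem
  -- Bound II : S ≤ (A0/n)^(k-1)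
  have hbound2 : (∑ i ∈ Finset.range m, (fA n l i / n) ^ k) +
      (∑ i ∈ Finset.range m, (fB n l i / n) ^ k) ≤ (A0/n)^(k-1) := by
    have hcA : ∀ i ∈ Finset.range m, fA n l i / n ≤ A0 / n :=
      fun i _ => by gcongr; exact fA_le_zero l i
    have hcB : ∀ i ∈ Finset.range m, fB n l i / n ≤ A0 / n := by
      intro i _
      gcongr
      exact le_trans (fB_le_zero l i) hba
    have h1 := sum_pow_le (by omega : 1 ≤ k) hfA0 hcA
    have h2 := sum_pow_le (by omega : 1 ≤ k) hfB0 hcB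
    have hpow0 : 0 ≤ (A0/n)^(k-1) := pow_nonneg (div_nonneg (by linarith) hnR.le) _
    have h3 : (∑ i ∈ Finset.range m, fA n l i / n) + (∑ i ∈ Finset.range m, fB n l i / n)
        ≤ 1 := by
      rw [← Finset.sum_div, ← Finset.sum_div, ← add_div, div_le_one hnR]
      exact hsum
    calc (∑ i ∈ Finset.range m, (fA n l i / n) ^ k) +
        (∑ i ∈ Finset.range m, (fB n l i / n) ^ k)
        ≤ (A0/n)^(k-1) * ((∑ i ∈ Finset.range m, fA n l i / n) +
            (∑ i ∈ Finset.range m, fB n l i / n)) := by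
          rw [mul_add]; exact add_le_add h1 h2
      _ ≤ (A0/n)^(k-1) * 1 := mul_le_mul_of_nonneg_left h3 hpow0
      _ = (A0/n)^(k-1) := mul_one _
  -- Bound I : S ≤ (A0/n)^k + ((n-A0)/n)^k
  have hbound1 : (∑ i ∈ Finset.range m, (fA n l i / n) ^ k) +
      (∑ i ∈ Finset.range m, (fB n l i / n) ^ k)
      ≤ (A0/n)^k + (((n:ℝ) - A0)/n)^k := by
    have hτ0 : 0 ≤ ((n:ℝ) - A0)/n := div_nonneg (by linarith) hnR.le
    have hsplitAk : (A0/n)^k + ∑ i ∈ (Finset.range m).erase 0, (fA n l i / n)^k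
        = ∑ i ∈ Finset.range m, (fA n l i / n)^k := by
      rw [hA0def]; exact Finset.add_sum_erase _ (fun i => (fA n l i / (n:ℝ))^k) h0mem
    have hcA : ∀ i ∈ (Finset.range m).erase 0, fA n l i / n ≤ ((n:ℝ) - A0) / n := by
      intro i hi
      have hi' := Finset.mem_of_mem_erase hi
      have hine := Finset.ne_of_mem_erase hi
      gcongr
      exact fA_rest_le l (Nat.pos_of_ne_zero hine) (Finset.mem_range.1 hi')
    have hcB : ∀ i ∈ Finset.range m, fB n l i / n ≤ ((n:ℝ) - A0) / n := by
      intro i _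
      gcongr
      exact le_trans (fB_le_zero l i) (fB_zero_le l hn0)
    have h1 := sum_pow_le (by omega : 1 ≤ k)
      (fun i hi => hfA0 i (Finset.mem_of_mem_erase hi)) hcA
    have h2 := sum_pow_le (by omega : 1 ≤ k) hfB0 hcB
    have hpow0 : 0 ≤ (((n:ℝ) - A0)/n)^(k-1) := pow_nonneg hτ0 _
    have h3 : (∑ i ∈ (Finset.range m).erase 0, fA n l i / n) +
        (∑ i ∈ Finset.range m, fB n l i / n) ≤ ((n:ℝ) - A0)/n := by
      rw [← Finset.sum_div, ← Finset.sum_div, ← add_div]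
      apply div_le_div_of_nonneg_right ?_ hnR.le
      linarith [hsplitA, hsum]
    have hrest : (∑ i ∈ (Finset.range m).erase 0, (fA n l i / n)^k) +
        (∑ i ∈ Finset.range m, (fB n l i / n)^k) ≤ (((n:ℝ) - A0)/n)^k := by
      calc (∑ i ∈ (Finset.range m).erase 0, (fA n l i / n)^k) +
          (∑ i ∈ Finset.range m, (fB n l i / n)^k)
          ≤ (((n:ℝ) - A0)/n)^(k-1) * ((∑ i ∈ (Finset.range m).erase 0, fA n l i / n) +
              (∑ i ∈ Finset.range m, fB n l i / n)) := by
            rw [mul_add]; exact add_le_add h1 h2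
        _ ≤ (((n:ℝ) - A0)/n)^(k-1) * (((n:ℝ) - A0)/n) := mul_le_mul_of_nonneg_left h3 hpow0
        _ = (((n:ℝ) - A0)/n)^k := by
            rw [← pow_succ]
            congr 1
            omega
    linarith [hsplitAk]
  constructor
  · -- part (i)
    intro hrc
    have hu8 : u ≤ 1/8 := by
      rw [hudef, div_le_iff₀ hnR]
      linarith
    have hExp := expBound1 hk hu0 hu8 hε0 hε2
    have hexpeq : (k:ℝ) * (-u + u^2) = -(k : ℝ) * r / n + (k : ℝ) * r ^ 2 / (n : ℝ) ^ 2 := by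
      rw [hudef]
      field_simp
    rw [← hαeq, ← hτeq] at hExp
    rw [← hexpeq]
    exact le_trans hbound1 hExp
  · -- part (ii)
    intro _
    have hα0' : 0 ≤ 1 - u - ε := by rw [← hαeq]; positivity
    have hExp := expBound2 hk hu0 hε0 hα0'
    have hexpeq : -((k:ℝ) * u) / 2 = -(k : ℝ) * r / (2 * n) := by
      rw [hudef]
      ring
    rw [← hαeq] at hExp
    rw [← hexpeq]
    exact le_trans hbound2 hExp
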